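/- Let n ≥ 2 and let f : F_2^n → {0,1} satisfy f̂(0) = 1/2 and every other Fourier coefficient equal to 0 or ±1/4. Then f is the indicator function of a disjoint union of two affine subspaces of F_2^n, each of dimension n−2. -/

import Mathlib

open Finset

/-- The Fourier coefficient `f̂(α) = E_x[f(x)·(-1)^⟨α,x⟩]` of `f : F_2^n → ℝ`. -/
noncomputable def fc {n : ℕ} (f : (Fin n → ZMod 2) → ℝ) (α : Fin n → ZMod 2) : ℝ :=
  (∑ x : Fin n → ZMod 2, f x * (-1 : ℝ) ^ (∑ i, α i * x i : ZMod 2).val) / 2 ^ n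

namespace Stmt12Aux

lemma zmod2_cases (c : ZMod 2) : c = 0 ∨ c = 1 := by revert c; decide

/-- sign character -/
noncomputable def chi {n : ℕ} (α x : Fin n → ZMod 2) : ℝ :=
  (-1 : ℝ) ^ (∑ i, α i * x i : ZMod 2).val

lemma val01 : ((0 : ZMod 2)).val = 0 ∧ ((1 : ZMod 2)).val = 1 ∧ ((1 : ZMod 2) + 1) = 0 := by
  decide

lemma npv_add (a b : ZMod 2) :
    ((-1 : ℝ)) ^ ((a + b).val) = (-1 : ℝ) ^ a.val * (-1 : ℝ) ^ b.val := by
  obtain ⟨v0, v1, v2⟩ := val01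
  rcases zmod2_cases a with ha | ha <;> rcases zmod2_cases b with hb | hb <;>
    subst ha <;> subst hb <;> simp [v0, v1, v2]

lemma chi_comm {n : ℕ} (α x : Fin n → ZMod 2) : chi α x = chi x α := by
  unfold chi
  congr 1
  exact congrArg _ (Finset.sum_congr rfl fun i _ => mul_comm _ _)

lemma chi_add_left {n : ℕ} (α β x : Fin n → ZMod 2) :
    chi (α + β) x = chi α x * chi β x := by
  unfold chi
  rw [← npv_add]
  congr 2
  rw [← Finset.sum_add_distrib]
  exact Finset.sum_congr rfl fun i _ => by simp [add_mul]

lemma chi_add_right {n : ℕ} (α x y : Fin n → ZMod 2) :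
    chi α (x + y) = chi α x * chi α y := by
  rw [chi_comm, chi_add_left, chi_comm x α, chi_comm y α]

lemma chi_zero_left {n : ℕ} (x : Fin n → ZMod 2) : chi 0 x = 1 := by
  unfold chi; simp

lemma chi_zero_right {n : ℕ} (α : Fin n → ZMod 2) : chi α 0 = 1 := by
  rw [chi_comm]; exact chi_zero_left α

lemma chi_pm {n : ℕ} (α x : Fin n → ZMod 2) : chi α x = 1 ∨ chi α x = -1 := by
  unfold chi
  obtain ⟨v0, v1, -⟩ := val01
  rcases zmod2_cases (∑ i, α i * x i) with hc | hc <;> rw [hc] <;> simp [v0, v1]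

lemma chi_single {n : ℕ} (α : Fin n → ZMod 2) (j : Fin n) :
    chi α (Pi.single j 1) = (-1 : ℝ) ^ (α j).val := by
  unfold chi
  congr 2
  rw [Finset.sum_eq_single j]
  · simp
  · intro i _ hij; simp [Pi.single_apply, hij]
  · simp

lemma sum_chi_ne_zero {n : ℕ} (α : Fin n → ZMod 2) (hα : α ≠ 0) :
    ∑ x : Fin n → ZMod 2, chi α x = 0 := by
  obtain ⟨j, hj⟩ : ∃ j, α j ≠ 0 := by
    by_contra hc
    push_neg at hc
    exact hα (funext fun j => hc j)
  have hj1 : α j = 1 := (zmod2_cases (α j)).resolve_left hj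
  set v : Fin n → ZMod 2 := Pi.single j 1 with hv
  have hchiv : chi α v = -1 := by
    obtain ⟨-, v1, -⟩ := val01
    rw [hv, chi_single, hj1, v1]; norm_num
  have key : ∑ x : Fin n → ZMod 2, chi α x
      = ∑ x : Fin n → ZMod 2, chi α (v + x) := by
    exact (Fintype.sum_equiv (Equiv.addLeft v) _ _ (fun x => rfl)).symm
  have key2 : ∑ x : Fin n → ZMod 2, chi α (v + x)
      = - ∑ x : Fin n → ZMod 2, chi α x := by
    rw [← Finset.sum_neg_distrib]
    exact Finset.sum_congr rfl fun x _ => by rw [chi_add_right, hchiv]; ring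
  have := key.trans key2
  linarith

lemma sum_chi_zero {n : ℕ} :
    ∑ x : Fin n → ZMod 2, chi (0 : Fin n → ZMod 2) x = 2 ^ n := by
  have : ∀ x : Fin n → ZMod 2, chi (0 : Fin n → ZMod 2) x = 1 := chi_zero_left
  rw [Finset.sum_congr rfl fun x _ => this x, Finset.sum_const]
  simp [Fintype.card_fun]

lemma neg_self {n : ℕ} (y : Fin n → ZMod 2) : -y = y := by
  funext i
  have : ∀ c : ZMod 2, -c = c := by decide
  exact this (y i)

lemma add_self_eq_zero_iff {n : ℕ} (x y : Fin n → ZMod 2) : x + y = 0 ↔ x = y := by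
  rw [add_eq_zero_iff_eq_neg, neg_self]

lemma eq_zero_of_chi {n : ℕ} (β : Fin n → ZMod 2) (hβ : ∀ x, chi β x = 1) : β = 0 := by
  by_contra hβ0
  obtain ⟨j, hj⟩ : ∃ j, β j ≠ 0 := by
    by_contra hc; push_neg at hc; exact hβ0 (funext fun j => hc j)
  have hj1 : β j = 1 := (zmod2_cases (β j)).resolve_left hj
  have := hβ (Pi.single j 1)
  rw [chi_single, hj1] at this
  obtain ⟨-, v1, -⟩ := val01
  rw [v1] at this
  norm_num at this

lemma fc_eq {n : ℕ} (f : (Fin n → ZMod 2) → ℝ) (α : Fin n → ZMod 2) :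
    fc f α = (∑ x, f x * chi α x) / 2 ^ n := rfl

lemma sum_chi_right {n : ℕ} (z : Fin n → ZMod 2) :
    ∑ α : Fin n → ZMod 2, chi α z = if z = 0 then (2 : ℝ) ^ n else 0 := by
  rw [Finset.sum_congr rfl fun α _ => chi_comm α z]
  by_cases hz : z = 0
  · subst hz; rw [if_pos rfl]; exact sum_chi_zero
  · rw [if_neg hz]; exact sum_chi_ne_zero z hz

lemma inversion {n : ℕ} (f : (Fin n → ZMod 2) → ℝ) (x : Fin n → ZMod 2) :
    ∑ α : Fin n → ZMod 2, fc f α * chi α x = f x := by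
  have h2n : (2 : ℝ) ^ n ≠ 0 := by positivity
  have key : ∀ α : Fin n → ZMod 2,
      fc f α * chi α x = (∑ y, f y * chi α (y + x)) / 2 ^ n := by
    intro α
    rw [fc_eq, div_mul_eq_mul_div, Finset.sum_mul]
    congr 1
    exact Finset.sum_congr rfl fun y _ => by rw [chi_add_right]; ring
  rw [Finset.sum_congr rfl fun α _ => key α, ← Finset.sum_div, Finset.sum_comm]
  have inner : ∀ y : Fin n → ZMod 2,
      ∑ α : Fin n → ZMod 2, f y * chi α (y + x)
        = if y = x then f y * 2 ^ n else 0 := by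
    intro y
    rw [← Finset.mul_sum, sum_chi_right]
    simp only [add_self_eq_zero_iff y x, mul_ite, mul_zero]
  rw [Finset.sum_congr rfl fun y _ => inner y]
  rw [Finset.sum_ite_eq' Finset.univ x fun y => f y * 2 ^ n]
  rw [if_pos (Finset.mem_univ x)]
  field_simp

lemma parseval {n : ℕ} (f : (Fin n → ZMod 2) → ℝ) :
    ∑ α : Fin n → ZMod 2, (fc f α) ^ 2 = (∑ x : Fin n → ZMod 2, f x * f x) / 2 ^ n := by
  have key : ∀ α : Fin n → ZMod 2,
      (fc f α) ^ 2 = (∑ x, f x * (fc f α * chi α x)) / 2 ^ n := by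
    intro α
    rw [pow_two]
    nth_rewrite 2 [fc_eq]
    rw [mul_div_assoc']
    congr 1
    rw [Finset.mul_sum]
    exact Finset.sum_congr rfl fun x _ => by ring
  rw [Finset.sum_congr rfl fun α _ => key α, ← Finset.sum_div, Finset.sum_comm]
  congr 1
  refine Finset.sum_congr rfl fun x _ => ?_
  rw [← Finset.mul_sum, inversion]

/-- The linear functional `x ↦ ∑ i, α i * x i`. -/
def bl {n : ℕ} (α : Fin n → ZMod 2) : (Fin n → ZMod 2) →ₗ[ZMod 2] ZMod 2 where
  toFun x := ∑ i, α i * x i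
  map_add' x y := by
    rw [← Finset.sum_add_distrib]
    exact Finset.sum_congr rfl fun i _ => by simp [mul_add]
  map_smul' c x := by
    simp only [RingHom.id_apply]
    rw [Finset.smul_sum]
    exact Finset.sum_congr rfl fun i _ => by
      simp [Pi.smul_apply, smul_eq_mul]; ring

lemma bl_apply {n : ℕ} (α x : Fin n → ZMod 2) : bl α x = ∑ i, α i * x i := rfl

lemma bl_add_left {n : ℕ} (α β x : Fin n → ZMod 2) : bl (α + β) x = bl α x + bl β x := by
  rw [bl_apply, bl_apply, bl_apply, ← Finset.sum_add_distrib]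
  exact Finset.sum_congr rfl fun i _ => by simp [add_mul]

lemma bl_single {n : ℕ} (α : Fin n → ZMod 2) (j : Fin n) :
    bl α (Pi.single j 1) = α j := by
  rw [bl_apply, Finset.sum_eq_single j]
  · simp
  · intro i _ hij; simp [Pi.single_apply, hij]
  · simp

lemma bl_one_of_ne_zero {n : ℕ} (α : Fin n → ZMod 2) (hα : α ≠ 0) :
    ∃ x, bl α x = 1 := by
  obtain ⟨j, hj⟩ : ∃ j, α j ≠ 0 := by
    by_contra hc; push_neg at hc; exact hα (funext fun j => hc j)
  exact ⟨Pi.single j 1, by rw [bl_single]; exact (zmod2_cases (α j)).resolve_left hj⟩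

/-- the pair map -/
def L {n : ℕ} (α β : Fin n → ZMod 2) : (Fin n → ZMod 2) →ₗ[ZMod 2] ZMod 2 × ZMod 2 :=
  (bl α).prod (bl β)

lemma L_surj {n : ℕ} (α β : Fin n → ZMod 2) (hα : α ≠ 0) (hβ : β ≠ 0) (hne : α ≠ β) :
    ∀ p q : ZMod 2, ∃ x, bl α x = p ∧ bl β x = q := by
  obtain ⟨x₁, hx₁⟩ := bl_one_of_ne_zero α hα
  obtain ⟨x₂, hx₂⟩ := bl_one_of_ne_zero β hβ
  have hab : α + β ≠ 0 := fun hc => hne ((add_self_eq_zero_iff α β).mp hc)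
  obtain ⟨x₃, hx₃⟩ := bl_one_of_ne_zero (α + β) hab
  have hx₃' : bl α x₃ + bl β x₃ = 1 := by
    rw [← bl_add_left, hx₃]
  have key : (∃ x, bl α x = 1 ∧ bl β x = 0) ∧ (∃ x, bl α x = 0 ∧ bl β x = 1) := by
    rcases zmod2_cases (bl β x₁) with hv | hv
    · refine ⟨⟨x₁, hx₁, hv⟩, ?_⟩
      rcases zmod2_cases (bl α x₂) with hw | hw
      · exact ⟨x₂, hw, hx₂⟩
      · exact ⟨x₁ + x₂, by simp [map_add, hx₁, hx₂, hv, hw]; decide,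
          by simp [map_add, hx₁, hx₂, hv, hw]⟩
    · rcases zmod2_cases (bl α x₂) with hw | hw
      · exact ⟨⟨x₁ + x₂, by simp [map_add, hx₁, hx₂, hv, hw],
          by simp [map_add, hx₁, hx₂, hv, hw]; decide⟩, ⟨x₂, hw, hx₂⟩⟩
      · rcases zmod2_cases (bl α x₃) with hz | hz
        · have hz' : bl β x₃ = 1 := by rw [hz] at hx₃'; simpa using hx₃'
          exact ⟨⟨x₁ + x₃, by simp [map_add, hx₁, hx₂, hv, hw, hz, hz'],
            by simp [map_add, hx₁, hx₂, hv, hw, hz, hz']; decide⟩, ⟨x₃, hz, hz'⟩⟩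
        · have hz' : bl β x₃ = 0 := by
            rw [hz] at hx₃'
            rcases zmod2_cases (bl β x₃) with h' | h'
            · exact h'
            · rw [h'] at hx₃'; exact absurd hx₃' (by decide)
          exact ⟨⟨x₃, hz, hz'⟩, ⟨x₁ + x₃, by simp [map_add, hx₁, hv, hz, hz']; decide,
            by simp [map_add, hx₁, hv, hz, hz']⟩⟩
  obtain ⟨⟨c₁, hc₁a, hc₁b⟩, ⟨c₂, hc₂a, hc₂b⟩⟩ := key
  intro p q
  rcases zmod2_cases p with hp | hp <;> rcases zmod2_cases q with hq | hq <;> subst hp <;> subst hq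
  · exact ⟨0, by simp, by simp⟩
  · exact ⟨c₂, hc₂a, hc₂b⟩
  · exact ⟨c₁, hc₁a, hc₁b⟩
  · exact ⟨c₁ + c₂, by simp [map_add, hc₁a, hc₂a], by simp [map_add, hc₁b, hc₂b]⟩

lemma finrank_kerL {n : ℕ} (α β : Fin n → ZMod 2)
    (hα : α ≠ 0) (hβ : β ≠ 0) (hne : α ≠ β) :
    Module.finrank (ZMod 2) (LinearMap.ker (L α β)) = n - 2 := by
  have hsurj : Function.Surjective (L α β) := by
    rintro ⟨p, q⟩
    obtain ⟨x, hx1, hx2⟩ := L_surj α β hα hβ hne p q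
    exact ⟨x, Prod.ext hx1 hx2⟩
  have hrange : LinearMap.range (L α β) = ⊤ := LinearMap.range_eq_top.mpr hsurj
  have h1 := LinearMap.finrank_range_add_finrank_ker (L α β)
  rw [hrange, finrank_top] at h1
  have h2 : Module.finrank (ZMod 2) (ZMod 2 × ZMod 2) = 2 := by
    rw [Module.finrank_prod, Module.finrank_self]
  have h3 : Module.finrank (ZMod 2) (Fin n → ZMod 2) = n := Module.finrank_fin_fun _
  rw [h2, h3] at h1
  omega

lemma image_coset {n : ℕ} (a : Fin n → ZMod 2)
    (T : (Fin n → ZMod 2) →ₗ[ZMod 2] ZMod 2 × ZMod 2) :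
    (a + ·) '' ((LinearMap.ker T : Submodule (ZMod 2) (Fin n → ZMod 2)) :
        Set (Fin n → ZMod 2)) = {x | T x = T a} := by
  ext x
  constructor
  · rintro ⟨v, hv, rfl⟩
    have hv' : T v = 0 := hv
    show T (a + v) = T a
    rw [map_add, hv', add_zero]
  · intro hx
    refine ⟨x - a, ?_, by simp⟩
    show T (x - a) = 0
    rw [map_sub, hx, sub_self]

lemma core_prod (fx u1 u2 u3 u4 : ℝ) (hf : fx = 0 ∨ fx = 1)
    (h1 : u1 = 1 ∨ u1 = -1) (h2 : u2 = 1 ∨ u2 = -1)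
    (h3 : u3 = 1 ∨ u3 = -1) (h4 : u4 = 1 ∨ u4 = -1)
    (hsum : u1 + u2 + u3 + u4 = 4 * fx - 2) :
    u1 * u2 * u3 * u4 = -1 := by
  rcases hf with hf | hf <;> rcases h1 with h1 | h1 <;> rcases h2 with h2 | h2 <;>
    rcases h3 with h3 | h3 <;> rcases h4 with h4 | h4 <;>
    subst hf <;> subst h1 <;> subst h2 <;> subst h3 <;> subst h4 <;> revert hsum <;> norm_num

lemma core_iff (fx u1 u2 u3 u4 : ℝ) (hf : fx = 0 ∨ fx = 1)
    (h1 : u1 = 1 ∨ u1 = -1) (h2 : u2 = 1 ∨ u2 = -1)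
    (h3 : u3 = 1 ∨ u3 = -1) (h4 : u4 = 1 ∨ u4 = -1)
    (hsum : u1 + u2 + u3 + u4 = 4 * fx - 2) :
    (fx = 1 ↔ (u1 = 1 ∧ u2 = 1) ∨ (u3 = 1 ∧ u4 = 1)) := by
  rcases hf with hf | hf <;> rcases h1 with h1 | h1 <;> rcases h2 with h2 | h2 <;>
    rcases h3 with h3 | h3 <;> rcases h4 with h4 | h4 <;>
    subst hf <;> subst h1 <;> subst h2 <;> subst h3 <;> subst h4 <;> revert hsum <;> norm_num

lemma card_four {α : Type*} [DecidableEq α] (S : Finset α) (hS : S.card = 4) :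
    ∃ a1 a2 a3 a4 : α, a1 ≠ a2 ∧ a1 ≠ a3 ∧ a1 ≠ a4 ∧ a2 ≠ a3 ∧ a2 ≠ a4 ∧ a3 ≠ a4 ∧
      S = {a1, a2, a3, a4} := by
  rw [show (4 : ℕ) = 3 + 1 from rfl, Finset.card_eq_succ] at hS
  obtain ⟨a1, T, ha1, rfl, hT⟩ := hS
  rw [Finset.card_eq_three] at hT
  obtain ⟨a2, a3, a4, h23, h24, h34, rfl⟩ := hT
  simp only [Finset.mem_insert, Finset.mem_singleton, not_or] at ha1
  exact ⟨a1, a2, a3, a4, ha1.1, ha1.2.1, ha1.2.2, h23, h24, h34, rfl⟩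

lemma pm_mul (a b : ℝ) (ha : a = 1 ∨ a = -1) (hb : b = 1 ∨ b = -1) :
    a * b = 1 ∨ a * b = -1 := by
  rcases ha with ha | ha <;> rcases hb with hb | hb <;> subst ha <;> subst hb <;> norm_num

lemma exists_t {n : ℕ} (s : ℝ) (hs : s = 1 ∨ s = -1) (α : Fin n → ZMod 2) :
    ∃ t : ZMod 2, ∀ x, (s * chi α x = 1 ↔ bl α x = t) := by
  obtain ⟨v0, v1, -⟩ := val01
  have hc : ∀ x, chi α x = (-1 : ℝ) ^ ((bl α x).val) := fun x => rfl
  rcases hs with hs | hs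
  · refine ⟨0, fun x => ?_⟩
    subst hs
    rcases zmod2_cases (bl α x) with hb | hb <;> rw [one_mul, hc, hb]
    · rw [v0]; norm_num
    · rw [v1]; constructor
      · intro h'; norm_num at h'
      · intro h'; exact absurd h' (by decide)
  · refine ⟨1, fun x => ?_⟩
    subst hs
    rcases zmod2_cases (bl α x) with hb | hb <;> rw [hc, hb]
    · rw [v0]; constructor
      · intro h'; norm_num at h'
      · intro h'; exact absurd h' (by decide)
    · rw [v1]; norm_num

end Stmt12Aux

open Stmt12Aux in
/-- The k = 2 case of the small-k lemma. -/
theorem stmt_12 {n : ℕ} (hn : 2 ≤ n) (f : (Fin n → ZMod 2) → ℝ)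
    (hf : ∀ x, f x = 0 ∨ f x = 1)
    (h0 : fc f 0 = 1 / 2 ^ (2 - 1))
    (h : ∀ α : Fin n → ZMod 2, α ≠ 0 →
      fc f α = 0 ∨ fc f α = 1 / 2 ^ 2 ∨ fc f α = -(1 / 2 ^ 2)) :
    ∃ (a b : Fin n → ZMod 2) (V W : Submodule (ZMod 2) (Fin n → ZMod 2)),
      Module.finrank (ZMod 2) V = n - 2 ∧ Module.finrank (ZMod 2) W = n - 2 ∧
      Disjoint ((a + ·) '' (V : Set (Fin n → ZMod 2)))
        ((b + ·) '' (W : Set (Fin n → ZMod 2))) ∧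
      {x | f x = 1} =
        (a + ·) '' (V : Set (Fin n → ZMod 2)) ∪ (b + ·) '' (W : Set (Fin n → ZMod 2)) := by
  classical
  have h0' : fc f 0 = 1 / 2 := by norm_num at h0; exact h0
  -- Parseval gives total Fourier weight 1/2
  have hP : ∑ α : Fin n → ZMod 2, (fc f α) ^ 2 = 1 / 2 := by
    rw [parseval]
    have hxx : ∀ x : Fin n → ZMod 2, f x * f x = f x * chi (0 : Fin n → ZMod 2) x := by
      intro x
      rw [chi_zero_left, mul_one]
      rcases hf x with hx | hx <;> rw [hx] <;> norm_num
    rw [Finset.sum_congr rfl fun x _ => hxx x, ← fc_eq, h0']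
  -- the support of the spectrum away from 0
  set S : Finset (Fin n → ZMod 2) :=
    Finset.univ.filter (fun α => fc f α ≠ 0 ∧ α ≠ 0) with hSdef
  have hmemS : ∀ α, α ∈ S ↔ fc f α ≠ 0 ∧ α ≠ 0 := by
    intro α; rw [hSdef, Finset.mem_filter]; simp
  have h0S : (0 : Fin n → ZMod 2) ∉ S := fun hc => ((hmemS 0).mp hc).2 rfl
  have hSsub : S ⊆ Finset.univ.erase 0 := fun α hα =>
    Finset.mem_erase.mpr ⟨((hmemS α).mp hα).2, Finset.mem_univ α⟩
  have hsplit : ∑ α : Fin n → ZMod 2, (fc f α) ^ 2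
      = (fc f 0) ^ 2 + ∑ α ∈ Finset.univ.erase 0, (fc f α) ^ 2 :=
    (Finset.add_sum_erase _ _ (Finset.mem_univ 0)).symm
  have herase : ∑ α ∈ Finset.univ.erase 0, (fc f α) ^ 2 = ∑ α ∈ S, (fc f α) ^ 2 := by
    refine (Finset.sum_subset hSsub fun α hα hαS => ?_).symm
    have hα0 : α ≠ 0 := (Finset.mem_erase.mp hα).1
    have : fc f α = 0 := by
      by_contra hc
      exact hαS ((hmemS α).mpr ⟨hc, hα0⟩)
    rw [this]; norm_num
  have hSsum : ∑ α ∈ S, (fc f α) ^ 2 = (S.card : ℝ) * (1 / 16) := by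
    rw [Finset.sum_congr rfl
      (fun α hα => show (fc f α) ^ 2 = 1 / 16 by
        obtain ⟨hfc, hα0⟩ := (hmemS α).mp hα
        rcases h α hα0 with hc | hc | hc
        · exact absurd hc hfc
        · rw [hc]; norm_num
        · rw [hc]; norm_num)]
    rw [Finset.sum_const, nsmul_eq_mul]
  have hcard : S.card = 4 := by
    have : (S.card : ℝ) * (1 / 16) = 1 / 4 := by
      rw [← hSsum, ← herase]
      have := hsplit
      rw [hP, h0'] at this
      linarith
    have : (S.card : ℝ) = 4 := by linarith
    exact_mod_cast this
  obtain ⟨a1, a2, a3, a4, h12, h13, h14, h23, h24, h34, hSeq⟩ := card_four S hcard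
  have hmem1 : a1 ∈ S := by rw [hSeq]; simp
  have hmem2 : a2 ∈ S := by rw [hSeq]; simp
  have hmem3 : a3 ∈ S := by rw [hSeq]; simp
  have hmem4 : a4 ∈ S := by rw [hSeq]; simp
  have hne01 : a1 ≠ 0 := ((hmemS a1).mp hmem1).2
  have hne02 : a2 ≠ 0 := ((hmemS a2).mp hmem2).2
  have hne03 : a3 ≠ 0 := ((hmemS a3).mp hmem3).2
  have hne04 : a4 ≠ 0 := ((hmemS a4).mp hmem4).2
  -- the signs
  set s1 : ℝ := 4 * fc f a1 with hs1def
  set s2 : ℝ := 4 * fc f a2 with hs2def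
  set s3 : ℝ := 4 * fc f a3 with hs3def
  set s4 : ℝ := 4 * fc f a4 with hs4def
  have hsgn : ∀ (a : Fin n → ZMod 2), a ∈ S → (4 * fc f a = 1 ∨ 4 * fc f a = -1) := by
    intro a ha
    obtain ⟨hfc, ha0⟩ := (hmemS a).mp ha
    rcases h a ha0 with hc | hc | hc
    · exact absurd hc hfc
    · left; rw [hc]; norm_num
    · right; rw [hc]; norm_num
  have hs1 : s1 = 1 ∨ s1 = -1 := hsgn a1 hmem1
  have hs2 : s2 = 1 ∨ s2 = -1 := hsgn a2 hmem2
  have hs3 : s3 = 1 ∨ s3 = -1 := hsgn a3 hmem3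
  have hs4 : s4 = 1 ∨ s4 = -1 := hsgn a4 hmem4
  have hu1 : ∀ x, s1 * chi a1 x = 1 ∨ s1 * chi a1 x = -1 := fun x => pm_mul _ _ hs1 (chi_pm a1 x)
  have hu2 : ∀ x, s2 * chi a2 x = 1 ∨ s2 * chi a2 x = -1 := fun x => pm_mul _ _ hs2 (chi_pm a2 x)
  have hu3 : ∀ x, s3 * chi a3 x = 1 ∨ s3 * chi a3 x = -1 := fun x => pm_mul _ _ hs3 (chi_pm a3 x)
  have hu4 : ∀ x, s4 * chi a4 x = 1 ∨ s4 * chi a4 x = -1 := fun x => pm_mul _ _ hs4 (chi_pm a4 x)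
  -- representation of f
  have hrep : ∀ x, s1 * chi a1 x + s2 * chi a2 x + s3 * chi a3 x + s4 * chi a4 x
      = 4 * f x - 2 := by
    intro x
    have hsmall : ∑ α ∈ insert (0 : Fin n → ZMod 2) S, fc f α * chi α x = f x := by
      rw [← inversion f x]
      refine Finset.sum_subset (Finset.subset_univ _) fun α _ hα => ?_
      simp only [Finset.mem_insert, not_or] at hα
      have : fc f α = 0 := by
        by_contra hc
        exact hα.2 ((hmemS α).mpr ⟨hc, hα.1⟩)
      rw [this, zero_mul]
    rw [Finset.sum_insert h0S, hSeq] at hsmall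
    rw [Finset.sum_insert (by simp [h12, h13, h14]),
        Finset.sum_insert (by simp [h23, h24]),
        Finset.sum_insert (by simp [h34]),
        Finset.sum_singleton] at hsmall
    rw [chi_zero_left, h0'] at hsmall
    rw [hs1def, hs2def, hs3def, hs4def]
    linear_combination 4 * hsmall
  -- odd parity: the product of the four signs is -1
  have hprod : ∀ x, (s1 * chi a1 x) * (s2 * chi a2 x) * (s3 * chi a3 x) * (s4 * chi a4 x)
      = -1 := fun x =>
    core_prod (f x) _ _ _ _ (hf x) (hu1 x) (hu2 x) (hu3 x) (hu4 x) (hrep x)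
  -- the t's
  obtain ⟨t1, ht1⟩ := exists_t s1 hs1 a1
  obtain ⟨t2, ht2⟩ := exists_t s2 hs2 a2
  obtain ⟨t3, ht3⟩ := exists_t s3 hs3 a3
  obtain ⟨t4, ht4⟩ := exists_t s4 hs4 a4
  -- base points
  obtain ⟨e1, he1a, he1b⟩ := L_surj a1 a2 hne01 hne02 h12 t1 t2
  obtain ⟨e2, he2a, he2b⟩ := L_surj a3 a4 hne03 hne04 h34 t3 t4
  refine ⟨e1, e2, LinearMap.ker (L a1 a2), LinearMap.ker (L a3 a4),
    finrank_kerL a1 a2 hne01 hne02 h12, finrank_kerL a3 a4 hne03 hne04 h34, ?_, ?_⟩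
  · -- disjointness
    rw [Set.disjoint_left]
    rintro x hx1 hx2
    rw [image_coset] at hx1 hx2
    have hx1' : bl a1 x = t1 ∧ bl a2 x = t2 := by
      have := hx1
      rw [Set.mem_setOf_eq] at this
      have h1 := congrArg Prod.fst this
      have h2 := congrArg Prod.snd this
      exact ⟨by simpa [L, he1a] using h1, by simpa [L, he1b] using h2⟩
    have hx2' : bl a3 x = t3 ∧ bl a4 x = t4 := by
      have := hx2
      rw [Set.mem_setOf_eq] at this
      have h1 := congrArg Prod.fst this
      have h2 := congrArg Prod.snd this
      exact ⟨by simpa [L, he2a] using h1, by simpa [L, he2b] using h2⟩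
    have e1' : s1 * chi a1 x = 1 := (ht1 x).mpr hx1'.1
    have e2' : s2 * chi a2 x = 1 := (ht2 x).mpr hx1'.2
    have e3' : s3 * chi a3 x = 1 := (ht3 x).mpr hx2'.1
    have e4' : s4 * chi a4 x = 1 := (ht4 x).mpr hx2'.2
    have := hprod x
    rw [e1', e2', e3', e4'] at this
    norm_num at this
  · -- the set identity
    ext x
    rw [Set.mem_union, image_coset, image_coset, Set.mem_setOf_eq, Set.mem_setOf_eq,
      Set.mem_setOf_eq]
    have hiff := core_iff (f x) _ _ _ _ (hf x) (hu1 x) (hu2 x) (hu3 x) (hu4 x) (hrep x)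
    rw [hiff, ht1 x, ht2 x, ht3 x, ht4 x]
    constructor
    · rintro (⟨hb1, hb2⟩ | ⟨hb3, hb4⟩)
      · left
        show L a1 a2 x = L a1 a2 e1
        have : L a1 a2 x = (t1, t2) := Prod.ext hb1 hb2
        rw [this]
        exact (Prod.ext he1a he1b).symm
      · right
        show L a3 a4 x = L a3 a4 e2
        have : L a3 a4 x = (t3, t4) := Prod.ext hb3 hb4
        rw [this]
        exact (Prod.ext he2a he2b).symm
    · rintro (hx | hx)
      · left
        have h1 := congrArg Prod.fst hx
        have h2 := congrArg Prod.snd hx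
        exact ⟨by simpa [L, he1a] using h1, by simpa [L, he1b] using h2⟩
      · right
        have h1 := congrArg Prod.fst hx
        have h2 := congrArg Prod.snd hx
        exact ⟨by simpa [L, he2a] using h1, by simpa [L, he2b] using h2⟩
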